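/- Let G = C₂⁴ with basis (e₁,…,e₄), e₀ = e₁+e₂+e₃+e₄, and let U = e₀e₁e₂e₃e₄, U₂ = e₁e₂(e₁+e₃)(e₂+e₄)(e₃+e₄). Then L(U·U₂) = [2,4], i.e., the zero-sum sequence U·U₂ has factorizations of lengths exactly 2, 3, and 4. -/

import Mathlib

/-- `S` is a minimal zero-sum sequence over `G`. -/
def IsMinZS {G : Type*} [AddCommGroup G] (S : Multiset G) : Prop :=
  S ≠ 0 ∧ S.sum = 0 ∧ ∀ T : Multiset G, T ≤ S → T ≠ 0 → T ≠ S → T.sum ≠ 0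

/-- The set of factorization lengths of `S` into atoms (minimal zero-sum sequences)
of the monoid of zero-sum sequences over `G`. -/
def ZSLengths {G : Type*} [AddCommGroup G] (S : Multiset G) : Set ℕ :=
  {n | ∃ l : Multiset (Multiset G),
    Multiset.card l = n ∧ (∀ T ∈ l, IsMinZS T) ∧ l.sum = S}

/-- The basis elements `e₁, …, e₄` of `C₂⁴ = (ℤ/2ℤ)⁴`. -/
def eC2 (i : Fin 4) : Fin 4 → ZMod 2 := Pi.single i 1

/-- `e₀ = e₁ + e₂ + e₃ + e₄`. -/
def e0C2 : Fin 4 → ZMod 2 := eC2 0 + eC2 1 + eC2 2 + eC2 3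

/-- The minimal zero-sum sequence `U = e₀e₁e₂e₃e₄` of length 5 over `C₂⁴`. -/
def UC2 : Multiset (Fin 4 → ZMod 2) := ↑[e0C2, eC2 0, eC2 1, eC2 2, eC2 3]

/-- The minimal zero-sum sequence `U₂ = e₁e₂(e₁+e₃)(e₂+e₄)(e₃+e₄)` of length 5 over `C₂⁴`. -/
def U2C2 : Multiset (Fin 4 → ZMod 2) :=
  ↑[eC2 0, eC2 1, eC2 0 + eC2 2, eC2 1 + eC2 3, eC2 2 + eC2 3]

lemma isMinZS_iff {G : Type*} [AddCommGroup G] (S : Multiset G) :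
    IsMinZS S ↔ S ≠ 0 ∧ S.sum = 0 ∧ ∀ T ∈ S.powerset, T ≠ 0 → T ≠ S → T.sum ≠ 0 := by
  unfold IsMinZS
  simp [Multiset.mem_powerset]

abbrev GC2 := Fin 4 → ZMod 2

lemma add_self_GC2 (x : GC2) : x + x = 0 :=
  funext fun i => (by decide : ∀ z : ZMod 2, z + z = 0) (x i)

lemma card_multiset_sum {α : Type*} (l : Multiset (Multiset α)) :
    Multiset.card l.sum = (l.map Multiset.card).sum := by
  induction l using Multiset.induction_on with
  | empty => simp
  | cons a s ih => simp [ih]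

lemma even_multiset_sum (l : Multiset ℕ) (h : ∀ x ∈ l, Even x) : Even l.sum := by
  induction l using Multiset.induction_on with
  | empty => simp
  | cons a s ih =>
    simp only [Multiset.sum_cons]
    exact (h a (Multiset.mem_cons_self a s)).add
      (ih fun x hx => h x (Multiset.mem_cons_of_mem hx))

lemma card_ge_two_of_min {T : Multiset GC2} (hT : IsMinZS T) (h0 : (0 : GC2) ∉ T) :
    2 ≤ Multiset.card T := by
  obtain ⟨hne, hsum, -⟩ := hT
  by_contra h
  interval_cases hc : Multiset.card T
  · exact hne (Multiset.card_eq_zero.mp hc)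
  · obtain ⟨a, ha⟩ := Multiset.card_eq_one.mp hc
    subst ha
    simp only [Multiset.sum_singleton] at hsum
    exact h0 (hsum ▸ Multiset.mem_singleton_self a)

/-- Over `G = C₂⁴`, with `U = e₀e₁e₂e₃e₄` and `U₂ = e₁e₂(e₁+e₃)(e₂+e₄)(e₃+e₄)`, one has
`L(U · U₂) = [2,4] = {2,3,4}`. -/
theorem stmt15 : ZSLengths (UC2 + U2C2) = Set.Icc 2 4 := by
  ext n
  simp only [Set.mem_Icc]
  constructor
  · rintro ⟨l, hcard, hmin, hsum⟩
    have hS0 : (0 : GC2) ∉ UC2 + U2C2 := by decide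
    have hmem0 : ∀ T ∈ l, (0 : GC2) ∉ T := by
      intro T hT hz
      exact hS0 (Multiset.mem_of_le (hsum ▸ Multiset.le_sum_of_mem hT) hz)
    have h2 : ∀ T ∈ l, 2 ≤ Multiset.card T := fun T hT =>
      card_ge_two_of_min (hmin T hT) (hmem0 T hT)
    have hcardS : (l.map Multiset.card).sum = 10 := by
      rw [← card_multiset_sum, hsum]; decide
    -- n ≤ 5
    have hle5 : n ≤ 5 := by
      by_contra h
      have : Multiset.card (l.map Multiset.card) • 2 ≤ (l.map Multiset.card).sum :=
        Multiset.card_nsmul_le_sum (by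
          intro x hx
          obtain ⟨T, hT, rfl⟩ := Multiset.mem_map.mp hx
          exact h2 T hT)
      rw [Multiset.card_map, smul_eq_mul] at this
      omega
    -- n ≥ 2
    have hge2 : 2 ≤ n := by
      by_contra h
      interval_cases hn : n
      · rw [Multiset.card_eq_zero.mp hcard] at hsum
        exact (by decide : (0 : Multiset GC2) ≠ UC2 + U2C2) hsum
      · obtain ⟨T, hT⟩ := Multiset.card_eq_one.mp hcard
        subst hT
        simp only [Multiset.sum_singleton] at hsum
        subst hsum
        obtain ⟨-, -, hmin'⟩ := hmin _ (Multiset.mem_singleton_self _)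
        exact hmin' UC2 (Multiset.le_add_right _ _) (by decide) (by decide) (by decide)
    -- n ≠ 5
    have hne5 : n ≠ 5 := by
      rintro rfl
      -- every atom has card exactly 2
      have hall2 : ∀ T ∈ l, Multiset.card T = 2 := by
        intro T hT
        by_contra h
        have h3 : 3 ≤ Multiset.card T := by have := h2 T hT; omega
        obtain ⟨l', rfl⟩ := Multiset.exists_cons_of_mem hT
        have hrest : Multiset.card (l'.map Multiset.card) • 2 ≤ (l'.map Multiset.card).sum :=
          Multiset.card_nsmul_le_sum (by
            intro x hx
            obtain ⟨T', hT', rfl⟩ := Multiset.mem_map.mp hx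
            exact h2 T' (Multiset.mem_cons_of_mem hT'))
        simp only [Multiset.card_cons] at hcard
        rw [Multiset.map_cons, Multiset.sum_cons] at hcardS
        rw [Multiset.card_map, smul_eq_mul] at hrest
        omega
      -- every atom is of the form {a, a}
      have hdouble : ∀ T ∈ l, ∃ a, T = {a, a} := by
        intro T hT
        obtain ⟨x, y, rfl⟩ := Multiset.card_eq_two.mp (hall2 T hT)
        obtain ⟨-, hsumT, -⟩ := hmin _ hT
        have hxy : x + y = 0 := by simpa using hsumT
        have : y = x := by
          have := add_self_GC2 x
          exact add_left_cancel (a := x) (by rw [hxy, this])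
        exact ⟨x, by rw [this]⟩
      -- count of e0C2 in the sum is even
      have hcount : Multiset.count e0C2 (l.sum) =
          (l.map (Multiset.count e0C2)).sum :=
        (Multiset.countAddMonoidHom e0C2).map_multiset_sum l
      have heven : Even (Multiset.count e0C2 (l.sum)) := by
        rw [hcount]
        apply even_multiset_sum
        intro x hx
        obtain ⟨T, hT, rfl⟩ := Multiset.mem_map.mp hx
        obtain ⟨a, rfl⟩ := hdouble T hT
        by_cases h : e0C2 = a
        · subst h; simp [Multiset.count_cons]
        · simp [Multiset.count_cons, Multiset.count_singleton, Ne.symm h, h]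
      rw [hsum] at heven
      have : Multiset.count e0C2 (UC2 + U2C2) = 1 := by decide
      rw [this] at heven
      exact (Nat.not_even_iff_odd.mpr (by decide)) heven
    omega
  · rintro ⟨h2, h4⟩
    interval_cases n
    · refine ⟨↑[UC2, U2C2], rfl, ?_, by decide⟩
      intro T hT
      simp only [Multiset.mem_coe, List.mem_cons, List.mem_singleton] at hT
      rcases hT with rfl | rfl | h
      · rw [isMinZS_iff]; decide
      · rw [isMinZS_iff]; decide
      · exact absurd h (List.not_mem_nil (a := T))
    · refine ⟨↑[(↑[eC2 0, eC2 0] : Multiset GC2),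
        ↑[e0C2, eC2 1, eC2 0 + eC2 2, eC2 3],
        ↑[eC2 1, eC2 2, eC2 1 + eC2 3, eC2 2 + eC2 3]], rfl, ?_, by decide⟩
      intro T hT
      simp only [Multiset.mem_coe, List.mem_cons, List.mem_singleton] at hT
      rcases hT with rfl | rfl | rfl | h
      · rw [isMinZS_iff]; decide
      · rw [isMinZS_iff]; decide
      · rw [isMinZS_iff]; decide
      · exact absurd h (List.not_mem_nil (a := T))
    · refine ⟨↑[(↑[eC2 0, eC2 0] : Multiset GC2),
        ↑[eC2 1, eC2 1],
        ↑[e0C2, eC2 0 + eC2 2, eC2 1 + eC2 3],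
        ↑[eC2 2, eC2 3, eC2 2 + eC2 3]], rfl, ?_, by decide⟩
      intro T hT
      simp only [Multiset.mem_coe, List.mem_cons, List.mem_singleton] at hT
      rcases hT with rfl | rfl | rfl | rfl | h
      · rw [isMinZS_iff]; decide
      · rw [isMinZS_iff]; decide
      · rw [isMinZS_iff]; decide
      · rw [isMinZS_iff]; decide
      · exact absurd h (List.not_mem_nil (a := T))
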